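/- For integers c > 1 and k ≥ 2, let H be the n-vertex k-uniform hypergraph on vertex set V with distinguished vertices x₁, …, x_c whose edges are all k-sets e with |e ∩ {x₁, …, x_c}| = 1. Then H has exactly c·C(n-c, k-1) edges and H contains no r-regular subgraph for any r > c·C(c(k-1), k-2). -/

import Mathlib

open Finset

/-- A hypergraph `H` has an `r`-regular subgraph if some nonempty collection of its
edges covers every vertex of its span exactly `r` times. -/
def HasRegularSubgraph {α : Type*} [DecidableEq α] (H : Finset (Finset α)) (r : ℕ) : Prop :=
  ∃ R : Finset (Finset α), R ⊆ H ∧ R.Nonempty ∧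
    ∀ v ∈ R.biUnion id, (R.filter (fun e => v ∈ e)).card = r

lemma double_count {α : Type*} [DecidableEq α] (A : Finset α) (R : Finset (Finset α)) :
    ∑ v ∈ A, (R.filter (fun e => v ∈ e)).card = ∑ e ∈ R, (e ∩ A).card := by
  have h : ∀ e : Finset α, e ∩ A = A.filter (fun v => v ∈ e) := by
    intro e
    rw [Finset.filter_mem_eq_inter, Finset.inter_comm]
  simp_rw [h, Finset.card_filter]
  exact Finset.sum_comm

lemma choose_bound (c k : ℕ) (hc : 1 ≤ c) (hk : 2 ≤ k) :
    (c * (k - 1)).choose (k - 1) ≤ c * (c * (k - 1)).choose (k - 2) := by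
  set N := c * (k - 1) with hN
  have h1 : k - 1 = (k - 2) + 1 := by omega
  have h2 : N.choose ((k - 2) + 1) * ((k - 2) + 1) = N.choose (k - 2) * (N - (k - 2)) :=
    Nat.choose_succ_right_eq N (k - 2)
  have h3 : N.choose (k - 2) * (N - (k - 2)) ≤ N.choose (k - 2) * N :=
    Nat.mul_le_mul_left _ (Nat.sub_le _ _)
  have h4 : N.choose (k - 1) * (k - 1) ≤ (c * N.choose (k - 2)) * (k - 1) := by
    rw [h1, h2]
    calc N.choose (k - 2) * (N - (k - 2)) ≤ N.choose (k - 2) * N := h3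
      _ = c * N.choose (k - 2) * ((k - 2) + 1) := by rw [hN, ← h1]; ring
  exact Nat.le_of_mul_le_mul_right h4 (by omega)

/-- For c > 1 and k ≥ 2, the n-vertex k-uniform hypergraph whose edges are
all k-sets meeting a fixed c-set X in exactly one vertex has exactly c·C(n-c, k-1) edges
and contains no r-regular subgraph for any r > c·C(c(k-1), k-2). -/
theorem stmt_9 {α : Type*} [Fintype α] [DecidableEq α] (c k : ℕ) (hc : 1 < c) (hk : 2 ≤ k)
    (X : Finset α) (hX : X.card = c) :
    ((Finset.univ.powersetCard k).filter (fun e => (e ∩ X).card = 1)).card =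
        c * (Fintype.card α - c).choose (k - 1) ∧
    ∀ r : ℕ, c * ((c * (k - 1)).choose (k - 2)) < r →
      ¬ HasRegularSubgraph
          ((Finset.univ.powersetCard k).filter (fun e => (e ∩ X).card = 1)) r := by
  have hXdisj : Disjoint X Xᶜ := disjoint_compl_right
  constructor
  · -- counting the edges
    have hcard : ((Finset.univ.powersetCard k).filter (fun e => (e ∩ X).card = 1)).card
        = ((X.powersetCard 1) ×ˢ (Xᶜ.powersetCard (k - 1))).card := by
      apply Finset.card_bij' (fun e _ => (e ∩ X, e \ X)) (fun p _ => p.1 ∪ p.2)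
      · intro e he
        simp only [Finset.mem_filter, Finset.mem_powersetCard_univ] at he
        obtain ⟨hek, heX⟩ := he
        simp only [Finset.mem_product, Finset.mem_powersetCard]
        refine ⟨⟨Finset.inter_subset_right, heX⟩, ?_, ?_⟩
        · intro v hv
          simp only [Finset.mem_sdiff] at hv
          simpa using hv.2
        · have := Finset.card_inter_add_card_sdiff e X
          omega
      · intro p hp
        simp only [Finset.mem_product, Finset.mem_powersetCard] at hp
        obtain ⟨⟨h1X, h11⟩, h2X, h2k⟩ := hp
        have hd : Disjoint p.1 p.2 := hXdisj.mono h1X h2X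
        simp only [Finset.mem_filter, Finset.mem_powersetCard_univ]
        constructor
        · rw [Finset.card_union_of_disjoint hd, h11, h2k]; omega
        · have : (p.1 ∪ p.2) ∩ X = p.1 := by
            rw [Finset.union_inter_distrib_right,
              Finset.inter_eq_left.mpr h1X]
            have : p.2 ∩ X = ∅ := by
              rw [← Finset.disjoint_iff_inter_eq_empty]
              exact (hXdisj.symm.mono h2X le_rfl)
            rw [this, Finset.union_empty]
          rw [this, h11]
      · intro e he
        simp only
        ext v
        simp only [Finset.mem_union, Finset.mem_inter, Finset.mem_sdiff]
        tauto
      · intro p hp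
        simp only [Finset.mem_product, Finset.mem_powersetCard] at hp
        obtain ⟨⟨h1X, h11⟩, h2X, h2k⟩ := hp
        have h2e : p.2 ∩ X = ∅ := by
          rw [← Finset.disjoint_iff_inter_eq_empty]
          exact (hXdisj.symm.mono h2X le_rfl)
        have h1e : p.1 ∩ X = p.1 := Finset.inter_eq_left.mpr h1X
        have hfst : (p.1 ∪ p.2) ∩ X = p.1 := by
          rw [Finset.union_inter_distrib_right, h1e, h2e, Finset.union_empty]
        have hsnd : (p.1 ∪ p.2) \ X = p.2 := by
          rw [Finset.union_sdiff_distrib, Finset.sdiff_eq_empty_iff_subset.mpr h1X,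
            Finset.empty_union, Finset.sdiff_eq_self_iff_disjoint.mpr
              (hXdisj.symm.mono h2X le_rfl)]
        ext <;> simp [hfst, hsnd]
    rw [hcard, Finset.card_product, Finset.card_powersetCard, Finset.card_powersetCard,
      hX, Nat.choose_one_right, Finset.card_compl, hX]
  · -- no r-regular subgraph
    rintro r hr ⟨R, hRH, hRne, hreg⟩
    set W := R.biUnion id with hW
    have hedge : ∀ e ∈ R, e.card = k ∧ (e ∩ X).card = 1 := by
      intro e he
      have := hRH he
      simp only [Finset.mem_filter, Finset.mem_powersetCard_univ] at this
      exact this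
    have heW : ∀ e ∈ R, e ⊆ W := fun e he => Finset.subset_biUnion_of_mem id he
    have hrpos : 0 < r := lt_of_le_of_lt (Nat.zero_le _) hr
    -- degree sums
    have hsum1 : r * (W ∩ X).card = R.card := by
      have h1 : ∑ v ∈ W ∩ X, (R.filter (fun e => v ∈ e)).card = r * (W ∩ X).card := by
        rw [Finset.sum_congr rfl (fun v hv => hreg v (Finset.mem_of_mem_inter_left hv))]
        simp [mul_comm]
      have h2 : ∑ e ∈ R, (e ∩ (W ∩ X)).card = R.card := by
        rw [Finset.sum_congr rfl (fun e he => ?_), Finset.sum_const, smul_eq_mul, mul_one]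
        rw [← Finset.inter_assoc, Finset.inter_eq_left.mpr (heW e he)]
        exact (hedge e he).2
      rw [← h1, double_count, h2]
    have hsum2 : r * (W \ X).card = R.card * (k - 1) := by
      have h1 : ∑ v ∈ W \ X, (R.filter (fun e => v ∈ e)).card = r * (W \ X).card := by
        rw [Finset.sum_congr rfl (fun v hv => hreg v (Finset.mem_sdiff.mp hv).1)]
        simp [mul_comm]
      have h2 : ∑ e ∈ R, (e ∩ (W \ X)).card = R.card * (k - 1) := by
        rw [Finset.sum_congr rfl (fun e he => ?_), Finset.sum_const, smul_eq_mul]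
        have hes : e ∩ (W \ X) = e \ X := by
          rw [← Finset.inter_sdiff_assoc, Finset.inter_eq_left.mpr (heW e he)]
        rw [hes]
        have := Finset.card_inter_add_card_sdiff e X
        have h1 := (hedge e he).1
        have h2 := (hedge e he).2
        omega
      rw [← h1, double_count, h2]
    -- |W \ X| ≤ c * (k-1)
    have hsX : (W ∩ X).card ≤ c := hX ▸ Finset.card_le_card Finset.inter_subset_right
    have ht : (W \ X).card ≤ c * (k - 1) := by
      have : r * (W \ X).card = r * ((W ∩ X).card * (k - 1)) := by
        rw [hsum2, ← hsum1]; ring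
      have heq : (W \ X).card = (W ∩ X).card * (k - 1) :=
        Nat.eq_of_mul_eq_mul_left hrpos this
      rw [heq]
      exact Nat.mul_le_mul_right _ hsX
    -- pick a vertex x ∈ X in W
    obtain ⟨e0, he0⟩ := hRne
    have he0X : (e0 ∩ X).card = 1 := (hedge e0 he0).2
    obtain ⟨x, hx⟩ := Finset.card_pos.mp (by omega : 0 < (e0 ∩ X).card)
    have hxe0 : x ∈ e0 := Finset.mem_of_mem_inter_left hx
    have hxX : x ∈ X := Finset.mem_of_mem_inter_right hx
    have hxW : x ∈ W := Finset.mem_biUnion.mpr ⟨e0, he0, hxe0⟩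
    -- each edge containing x has the form {x} ∪ S for S ⊆ W \ X of size k-1
    have hsing : ∀ e ∈ R, x ∈ e → e ∩ X = {x} := by
      intro e he hxe
      obtain ⟨a, ha⟩ := Finset.card_eq_one.mp (hedge e he).2
      have : x ∈ ({a} : Finset α) := ha ▸ Finset.mem_inter.mpr ⟨hxe, hxX⟩
      rw [Finset.mem_singleton] at this
      rw [ha, this]
    have hdeg : (R.filter (fun e => x ∈ e)).card ≤ ((W \ X).powersetCard (k - 1)).card := by
      apply Finset.card_le_card_of_injOn (fun e => e \ {x})
      · intro e he
        simp only [Finset.coe_filter, Set.mem_setOf_eq] at he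
        obtain ⟨heR, hxe⟩ := he
        have hsd : e \ {x} = e \ X := by
          ext v
          simp only [Finset.mem_sdiff, Finset.mem_singleton]
          constructor
          · rintro ⟨hve, hvx⟩
            refine ⟨hve, fun hvX => hvx ?_⟩
            have : v ∈ e ∩ X := Finset.mem_inter.mpr ⟨hve, hvX⟩
            rw [hsing e heR hxe] at this
            exact Finset.mem_singleton.mp this
          · rintro ⟨hve, hvX⟩
            exact ⟨hve, fun h => hvX (h ▸ hxX)⟩
        simp only [Finset.mem_coe]
        rw [Finset.mem_powersetCard, hsd]
        constructor
        · exact Finset.sdiff_subset_sdiff (heW e heR) le_rfl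
        · have := Finset.card_inter_add_card_sdiff e X
          have h1 := (hedge e heR).1
          have h2 := (hedge e heR).2
          omega
      · intro e he f hf hef
        simp only [Finset.coe_filter, Set.mem_setOf_eq] at he hf
        have hxe : ({x} : Finset α) ⊆ e := Finset.singleton_subset_iff.mpr he.2
        have hxf : ({x} : Finset α) ⊆ f := Finset.singleton_subset_iff.mpr hf.2
        have hef' : e \ {x} = f \ {x} := hef
        calc e = e \ {x} ∪ {x} := (Finset.sdiff_union_of_subset hxe).symm
          _ = f \ {x} ∪ {x} := by rw [hef']
          _ = f := Finset.sdiff_union_of_subset hxf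
    rw [hreg x hxW, Finset.card_powersetCard] at hdeg
    have hfinal : r ≤ c * ((c * (k - 1)).choose (k - 2)) :=
      hdeg.trans ((Nat.choose_le_choose _ ht).trans (choose_bound c k (by omega) hk))
    omega
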